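/- If G is a graph such that for every edge e of G the group-choice index of G − e is strictly less than the group-choice index of G, then the minimum degree of the line graph ℓ(G) is at least χ'_{gl}(G) − 1. -/

import Mathlib

open SimpleGraph

/-- A graph `H` is `k`-group choosable if for every (additive) Abelian group `A` of order at
least `k`, every list assignment giving each vertex a `k`-element subset of `A`, and every
"forbidden difference" function `f` on oriented edges (encoded as an antisymmetric function
on ordered pairs of vertices, which is equivalent to fixing an orientation), there is a list
coloring `c` with `c x - c y ≠ f x y` for every edge `xy`. -/
def GroupChoosable {W : Type} (H : SimpleGraph W) (k : ℕ) : Prop :=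
  ∀ (A : Type) [AddCommGroup A] [Fintype A], k ≤ Fintype.card A →
    ∀ L : W → Finset A, (∀ v, (L v).card = k) →
      ∀ f : W → W → A, (∀ x y, f x y = - f y x) →
        ∃ c : W → A, (∀ v, c v ∈ L v) ∧ ∀ ⦃x y⦄, H.Adj x y → c x - c y ≠ f x y

/-- The group choice number of a graph: the least `k` such that it is `k`-group choosable. -/
noncomputable def groupChoiceNumber {W : Type} (H : SimpleGraph W) : ℕ :=
  sInf {k | GroupChoosable H k}

/-- `G` is edge-`k`-group choosable if its line graph is `k`-group choosable. -/
def EdgeGroupChoosable {V : Type} (G : SimpleGraph V) (k : ℕ) : Prop :=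
  GroupChoosable G.lineGraph k

/-- The group-choice index of `G`: the group choice number of its line graph. -/
noncomputable def groupChoiceIndex {V : Type} (G : SimpleGraph V) : ℕ :=
  groupChoiceNumber G.lineGraph

noncomputable instance {V : Type} {G : SimpleGraph V} : DecidableRel G.lineGraph.Adj :=
  Classical.decRel _

/-- Monotonicity: being `k`-group choosable implies being `k'`-group choosable for `k ≤ k'`. -/
lemma gc_mono {W : Type} {H : SimpleGraph W} {k k' : ℕ} (hk : GroupChoosable H k)
    (hle : k ≤ k') : GroupChoosable H k' := by
  intro A _ _ hcard L hL f hf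
  choose L' hsub hcardL' using fun v =>
    Finset.exists_subset_card_eq (s := L v) (n := k) (by rw [hL v]; exact hle)
  obtain ⟨c, hc1, hc2⟩ := hk A (le_trans hle hcard) L' hcardL' f hf
  exact ⟨c, fun v => hsub v (hc1 v), hc2⟩

/-- Greedy coloring: every finite graph is `|W|`-group choosable. -/
lemma gc_card {W : Type} [Fintype W] (H : SimpleGraph W) :
    GroupChoosable H (Fintype.card W) := by
  classical
  intro A _ _ hcard L hL f hf
  have key : ∀ s : Finset W, ∃ c : W → A, (∀ v ∈ s, c v ∈ L v) ∧
      ∀ x ∈ s, ∀ y ∈ s, H.Adj x y → c x - c y ≠ f x y := by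
    intro s
    induction s using Finset.induction with
    | empty =>
      rcases isEmpty_or_nonempty W with hW | hW
      · exact ⟨isEmptyElim, by simp, by simp⟩
      · have hA : ∀ v, (L v).Nonempty := fun v =>
          Finset.card_pos.mp (by rw [hL]; exact Fintype.card_pos)
        exact ⟨fun v => (hA v).choose, by simp, by simp⟩
    | @insert a s ha ih =>
      obtain ⟨c, hc1, hc2⟩ := ih
      set T : Finset A := s.image (fun y => f a y + c y) with hT
      have hTcard : T.card < (L a).card := by
        rw [hL]
        calc T.card ≤ s.card := Finset.card_image_le
          _ < Fintype.card W := Finset.card_lt_card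
            (Finset.ssubset_univ_iff.mpr (fun hs => ha (hs ▸ Finset.mem_univ a)))
      have hne : (L a \ T).Nonempty := Finset.card_pos.mp
        (lt_of_lt_of_le (Nat.sub_pos_of_lt hTcard) (Finset.le_card_sdiff T (L a)))
      obtain ⟨b, hb⟩ := hne
      rw [Finset.mem_sdiff] at hb
      refine ⟨Function.update c a b, ?_, ?_⟩
      · intro v hv
        rcases Finset.mem_insert.mp hv with rfl | hv
        · simpa using hb.1
        · rw [Function.update_of_ne (fun hh => ha (by rw [← hh]; exact hv))]
          exact hc1 v hv
      · intro x hx y hy hadj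
        obtain hx' | hx := Finset.mem_insert.mp hx
        · obtain hy' | hy := Finset.mem_insert.mp hy
          · exact absurd (hx'.trans hy'.symm) hadj.ne
          · rw [hx', Function.update_self,
              Function.update_of_ne (fun hh => ha (by rw [← hh]; exact hy))]
            intro hcon
            exact hb.2 (hT ▸ Finset.mem_image.mpr
              ⟨y, hy, (sub_eq_iff_eq_add.mp hcon).symm⟩)
        · obtain hy' | hy := Finset.mem_insert.mp hy
          · rw [hy', Function.update_self,
              Function.update_of_ne (fun hh => ha (by rw [← hh]; exact hx))]
            intro hcon
            rw [hf x a] at hcon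
            have hcx : c x = - f a x + b := sub_eq_iff_eq_add.mp hcon
            have hbx : b = f a x + c x := by rw [hcx, add_neg_cancel_left]
            exact hb.2 (hT ▸ Finset.mem_image.mpr ⟨x, hx, hbx.symm⟩)
          · rw [Function.update_of_ne (fun hh => ha (by rw [← hh]; exact hx)),
              Function.update_of_ne (fun hh => ha (by rw [← hh]; exact hy))]
            exact hc2 x hx y hy hadj
  obtain ⟨c, hc1, hc2⟩ := key Finset.univ
  exact ⟨c, fun v => hc1 v (Finset.mem_univ v),
    fun x y hadj => hc2 x (Finset.mem_univ x) y (Finset.mem_univ y) hadj⟩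

/-- Lemma 2: if deleting any edge of `G` strictly decreases the group-choice index, then the
minimum degree of the line graph `ℓ(G)` is at least `χ'_{gl}(G) - 1`. -/
theorem stmt {V : Type} [Fintype V] [DecidableEq V] (G : SimpleGraph V) [DecidableRel G.Adj]
    (h : ∀ e ∈ G.edgeSet, groupChoiceIndex (G.deleteEdges {e}) < groupChoiceIndex G) :
    groupChoiceIndex G - 1 ≤ G.lineGraph.minDegree := by
  classical
  rcases Nat.eq_zero_or_pos (groupChoiceIndex G) with hk0 | hk1
  · rw [hk0]; exact Nat.zero_le _
  -- the line graph has a vertex (otherwise the group-choice index would be 0)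
  have hSmem : groupChoiceIndex G ∈ {k | GroupChoosable G.lineGraph k} := by
    have hgt : groupChoiceIndex G ≤ Fintype.card G.edgeSet :=
      Nat.sInf_le (gc_card G.lineGraph)
    exact Nat.sInf_mem ⟨_, gc_card G.lineGraph⟩
  have hEne : Nonempty G.edgeSet := by
    rcases isEmpty_or_nonempty G.edgeSet with hE | hE
    · exfalso
      have h0 : GroupChoosable G.lineGraph 0 := by
        have := gc_card G.lineGraph
        rwa [Fintype.card_eq_zero] at this
      have : groupChoiceIndex G ≤ 0 := Nat.sInf_le h0
      omega
    · exact hE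
  apply SimpleGraph.le_minDegree_of_forall_le_degree
  intro e
  by_contra hd
  push_neg at hd
  -- set up the deleted graph
  set G' := G.deleteEdges {(e : Sym2 V)} with hG'
  have hsub : G'.edgeSet ⊆ G.edgeSet := by
    rw [hG', SimpleGraph.edgeSet_deleteEdges]
    exact Set.diff_subset
  haveI : Fintype G'.edgeSet := (Set.toFinite _).fintype
  -- from the hypothesis, `G'` is `(k-1)`-group choosable
  have hlt : groupChoiceIndex G' < groupChoiceIndex G := h e e.2
  have hS'ne : {m | GroupChoosable G'.lineGraph m}.Nonempty := ⟨_, gc_card G'.lineGraph⟩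
  have hG'mem : GroupChoosable G'.lineGraph (groupChoiceIndex G') := Nat.sInf_mem hS'ne
  have hG'k : GroupChoosable G'.lineGraph (groupChoiceIndex G - 1) :=
    gc_mono hG'mem (by omega)
  -- we show `G` is `(k-1)`-group choosable, contradicting minimality
  have hGk : GroupChoosable G.lineGraph (groupChoiceIndex G - 1) := by
    intro A _ _ hcard L hL f hf
    set ι : G'.edgeSet → G.edgeSet := fun x => ⟨(x : Sym2 V), hsub x.2⟩ with hι
    obtain ⟨c, hcmem, hcadj⟩ := hG'k A hcard (fun x => L (ι x)) (fun x => hL _)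
      (fun x y => f (ι x) (ι y)) (fun x y => hf _ _)
    -- color every edge other than `e`
    have hmem' : ∀ y : G.edgeSet, y ≠ e → (y : Sym2 V) ∈ G'.edgeSet := by
      intro y hy
      rw [hG', SimpleGraph.edgeSet_deleteEdges]
      exact ⟨y.2, fun hc => hy (Subtype.ext hc)⟩
    set g : G.edgeSet → A := fun y =>
      if hy : y = e then 0 else c ⟨(y : Sym2 V), hmem' y hy⟩ with hg
    set T : Finset A := (G.lineGraph.neighborFinset e).image (fun y => f e y + g y) with hT
    have hTcard : T.card < (L e).card := by
      rw [hL]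
      calc T.card ≤ (G.lineGraph.neighborFinset e).card := Finset.card_image_le
        _ = G.lineGraph.degree e := rfl
        _ < groupChoiceIndex G - 1 := hd
    have hbne : (L e \ T).Nonempty := Finset.card_pos.mp
      (lt_of_lt_of_le (Nat.sub_pos_of_lt hTcard) (Finset.le_card_sdiff T (L e)))
    obtain ⟨b, hb⟩ := hbne
    rw [Finset.mem_sdiff] at hb
    refine ⟨fun y => if y = e then b else g y, ?_, ?_⟩
    · intro v
      show (if v = e then b else g v) ∈ L v
      by_cases hv : v = e
      · rw [if_pos hv, hv]; exact hb.1
      · rw [if_neg hv, hg]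
        simp only [dif_neg hv]
        exact hcmem ⟨(v : Sym2 V), hmem' v hv⟩
    · intro x y hadj
      show (if x = e then b else g x) - (if y = e then b else g y) ≠ f x y
      by_cases hx : x = e <;> by_cases hy : y = e
      · exact absurd (hx.trans hy.symm) hadj.ne
      · -- x = e
        rw [if_pos hx, if_neg hy]
        intro hcon
        subst hx
        have hyT : f x y + g y ∈ T :=
          hT ▸ Finset.mem_image.mpr ⟨y, (SimpleGraph.mem_neighborFinset _ _ _).mpr hadj, rfl⟩
        exact hb.2 ((sub_eq_iff_eq_add.mp hcon) ▸ hyT)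
      · -- y = e
        rw [if_neg hx, if_pos hy]
        intro hcon
        subst hy
        rw [hf x y] at hcon
        have hcx : g x = - f y x + b := sub_eq_iff_eq_add.mp hcon
        have hbx : b = f y x + g x := by rw [hcx, add_neg_cancel_left]
        have hxT : f y x + g x ∈ T := hT ▸ Finset.mem_image.mpr
          ⟨x, (SimpleGraph.mem_neighborFinset _ _ _).mpr hadj.symm, rfl⟩
        exact hb.2 (hbx ▸ hxT)
      · -- neither endpoint is e
        rw [if_neg hx, if_neg hy, hg]
        simp only [dif_neg hx, dif_neg hy]
        have hadj' : G'.lineGraph.Adj ⟨(x : Sym2 V), hmem' x hx⟩ ⟨(y : Sym2 V), hmem' y hy⟩ := by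
          rw [SimpleGraph.lineGraph_adj_iff_exists] at hadj ⊢
          obtain ⟨hne, v, hv1, hv2⟩ := hadj
          exact ⟨fun hc => hne (Subtype.ext (show (x : Sym2 V) = (y : Sym2 V) from congrArg (Subtype.val : G'.edgeSet → Sym2 V) hc)), v, hv1, hv2⟩
        exact hcadj hadj'
  have : groupChoiceIndex G ≤ groupChoiceIndex G - 1 := Nat.sInf_le hGk
  omega
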